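/- arXiv:2504.16477 — 3 statements merged into one kernel-verified Lean document; each statement's English description precedes it below -/
import Mathlib

section
/- Let E be a real inner product space, and let f : E → ℝ be a differentiable function that is μ-strongly convex and L-smooth with 0 < μ ≤ L. If the step size β satisfies 0 < β ≤ 2/(μ + L), then for all x₁, x₂ ∈ E: ‖x₁ − x₂ − β(∇f(x₁) − ∇f(x₂))‖ ≤ (1 − μβ)·‖x₁ − x₂‖. -/
open RealInnerProductSpace

section Aux

variable {E : Type*} [NormedAddCommGroup E] [InnerProductSpace ℝ E] [CompleteSpace E]

set_option maxHeartbeats 1000000 in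
/-- Descent lemma: an `L`-smooth differentiable function admits a quadratic upper bound. -/
lemma descent_lemma (f : E → ℝ) (L : ℝ) (hL : 0 ≤ L)
    (hdiff : Differentiable ℝ f)
    (hsmooth : ∀ x y : E, ‖gradient f x - gradient f y‖ ≤ L * ‖x - y‖)
    (x y : E) :
    f y ≤ f x + ⟪gradient f x, y - x⟫ + L / 2 * ‖y - x‖ ^ 2 := by
  set g := gradient f with hg
  have hgc : Continuous g := by
    rw [Metric.continuous_iff]
    intro b ε hε
    rcases eq_or_lt_of_le hL with h0 | hLpos
    · exact ⟨1, one_pos, fun a _ => by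
        have := hsmooth a b
        rw [← h0] at this
        simpa [dist_eq_norm] using lt_of_le_of_lt (by simpa using this) hε⟩
    · refine ⟨ε / L, by positivity, fun a ha => ?_⟩
      have := hsmooth a b
      rw [dist_eq_norm] at *
      calc ‖g a - g b‖ ≤ L * ‖a - b‖ := this
        _ < L * (ε / L) := by exact mul_lt_mul_of_pos_left ha hLpos
        _ = ε := by field_simp
  set l : ℝ → E := fun t => x + t • (y - x) with hl
  have hld : ∀ t : ℝ, HasDerivAt l (y - x) t := by
    intro t
    simpa [hl] using ((hasDerivAt_id t).smul_const (y - x)).const_add x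
  have hφd : ∀ t : ℝ, HasDerivAt (fun t => f (l t)) ⟪g (l t), y - x⟫ t := by
    intro t
    have hf : HasFDerivAt f (InnerProductSpace.toDual ℝ E (g (l t))) (l t) :=
      (hdiff (l t)).hasGradientAt
    have := hf.comp_hasDerivAt t (hld t)
    simp [InnerProductSpace.toDual_apply_apply] at this
    exact this
  have hlc : Continuous l := by fun_prop
  have hcont : Continuous (fun t : ℝ => ⟪g (l t), y - x⟫) :=
    (continuous_inner.comp ((hgc.comp hlc).prodMk continuous_const))
  have hint : f (l 1) - f (l 0) = ∫ t in (0:ℝ)..1, ⟪g (l t), y - x⟫ := by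
    rw [intervalIntegral.integral_eq_sub_of_hasDerivAt (fun t _ => hφd t)
      (hcont.intervalIntegrable 0 1)]
  have hl0 : l 0 = x := by simp [hl]
  have hl1 : l 1 = y := by simp [hl]
  have hbound : ∀ t ∈ Set.Icc (0:ℝ) 1,
      ⟪g (l t), y - x⟫ ≤ ⟪g x, y - x⟫ + t * (L * ‖y - x‖ ^ 2) := by
    intro t ht
    have h2 : ‖g (l t) - g x‖ ≤ L * ‖l t - x‖ := hsmooth _ _
    have h3 : ‖l t - x‖ = t * ‖y - x‖ := by
      rw [hl]; simp [norm_smul, abs_of_nonneg ht.1]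
    have h4 : ⟪g (l t) - g x, y - x⟫ = ⟪g (l t), y - x⟫ - ⟪g x, y - x⟫ := by
      rw [inner_sub_left]
    have h5 : ⟪g (l t), y - x⟫ - ⟪g x, y - x⟫ ≤ L * (t * ‖y - x‖) * ‖y - x‖ := by
      rw [← h4, ← h3]
      calc ⟪g (l t) - g x, y - x⟫ ≤ ‖g (l t) - g x‖ * ‖y - x‖ := real_inner_le_norm _ _
        _ ≤ L * ‖l t - x‖ * ‖y - x‖ := mul_le_mul_of_nonneg_right h2 (norm_nonneg _)
    have h6 : L * (t * ‖y - x‖) * ‖y - x‖ = t * (L * ‖y - x‖ ^ 2) := by ring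
    linarith [h5]
  have hmono : (∫ t in (0:ℝ)..1, ⟪g (l t), y - x⟫) ≤
      ∫ t in (0:ℝ)..1, (⟪g x, y - x⟫ + t * (L * ‖y - x‖ ^ 2)) := by
    apply intervalIntegral.integral_mono_on zero_le_one
      (hcont.intervalIntegrable 0 1)
      (by apply Continuous.intervalIntegrable; fun_prop)
    exact hbound
  have hval : (∫ t in (0:ℝ)..1, (⟪g x, y - x⟫ + t * (L * ‖y - x‖ ^ 2)))
      = ⟪g x, y - x⟫ + L / 2 * ‖y - x‖ ^ 2 := by
    rw [intervalIntegral.integral_add (by apply Continuous.intervalIntegrable; fun_prop)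
      (by apply Continuous.intervalIntegrable; fun_prop)]
    simp [intervalIntegral.integral_mul_const, integral_id]
    ring
  rw [hl0, hl1] at hint
  rw [hval] at hmono
  linarith [hmono, hint.le, hint.ge]

omit [CompleteSpace E] in
/-- Co-coercivity from a linear lower bound and a quadratic upper bound. -/
lemma cocoercivity (φ : E → ℝ) (p : E → E) (M : ℝ) (hM : 0 ≤ M)
    (hconv : ∀ x y : E, φ y ≥ φ x + ⟪p x, y - x⟫)
    (hqdesc : ∀ x y : E, φ y ≤ φ x + ⟪p x, y - x⟫ + M / 2 * ‖y - x‖ ^ 2) :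
    ∀ x y : E, M * ⟪p x - p y, x - y⟫ ≥ ‖p x - p y‖ ^ 2 := by
  intro x y
  obtain ⟨u, hu⟩ : ∃ u : E, u = p x - p y := ⟨_, rfl⟩
  rw [← hu]
  have hgen : ∀ t : ℝ, 2 * t * ‖u‖ ^ 2 - M * (t ^ 2 * ‖u‖ ^ 2) ≤ ⟪u, x - y⟫ := by
    intro t
    have h1 := hconv x (y + t • u)
    have h2 := hqdesc y (y + t • u)
    have h3 := hconv y (x - t • u)
    have h4 := hqdesc x (x - t • u)
    have e1 : ⟪p x, y + t • u - x⟫ = ⟪p x, y - x⟫ + t * ⟪p x, u⟫ := by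
      rw [show y + t • u - x = (y - x) + t • u by abel, inner_add_right, inner_smul_right]
    have e2 : ⟪p y, y + t • u - y⟫ = t * ⟪p y, u⟫ := by
      simp [inner_smul_right]
    have e3 : ⟪p y, x - t • u - y⟫ = ⟪p y, x - y⟫ + (- t) * ⟪p y, u⟫ := by
      rw [show x - t • u - y = (x - y) + (-t) • u by simp [sub_eq_add_neg]; abel,
        inner_add_right, inner_smul_right]
    have e4 : ⟪p x, x - t • u - x⟫ = (- t) * ⟪p x, u⟫ := by
      simp [inner_smul_right]
    have n1 : ‖y + t • u - y‖ ^ 2 = t ^ 2 * ‖u‖ ^ 2 := by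
      simp [norm_smul, mul_pow, sq_abs]
    have n2 : ‖x - t • u - x‖ ^ 2 = t ^ 2 * ‖u‖ ^ 2 := by
      simp [norm_smul, mul_pow, sq_abs]
    have ip : ⟪p x, u⟫ - ⟪p y, u⟫ = ‖u‖ ^ 2 := by
      rw [hu, ← inner_sub_left, real_inner_self_eq_norm_sq]
    have ixy : ⟪u, x - y⟫ = ⟪p x, x - y⟫ - ⟪p y, x - y⟫ := by
      rw [hu, inner_sub_left]
    have iyx : ⟪p x, y - x⟫ = - ⟪p x, x - y⟫ := by
      rw [show y - x = -(x - y) by abel, inner_neg_right]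
    rw [e1, iyx] at h1
    rw [e2, n1] at h2
    rw [e3] at h3
    rw [e4, n2] at h4
    have ipt : t * ⟪p x, u⟫ - t * ⟪p y, u⟫ = t * ‖u‖ ^ 2 := by
      rw [← mul_sub, ip]
    nlinarith [h1, h2, h3, h4, ipt, ixy]
  rcases eq_or_lt_of_le hM with heq | hMpos
  · have hu0 : ‖u‖ ^ 2 ≤ 0 := by
      by_contra hc
      push_neg at hc
      have h := hgen ((⟪u, x - y⟫ + 1) / (2 * ‖u‖ ^ 2))
      rw [← heq] at h
      have hne : ‖u‖ ≠ 0 := by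
        intro h0
        rw [h0] at hc
        norm_num at hc
      have he : 2 * ((⟪u, x - y⟫ + 1) / (2 * ‖u‖ ^ 2)) * ‖u‖ ^ 2 = ⟪u, x - y⟫ + 1 := by
        field_simp
      nlinarith [h, he]
    have h0 : ‖u‖ ^ 2 = 0 := le_antisymm hu0 (by positivity)
    rw [h0]
    have hu' : u = 0 := by
      rwa [pow_eq_zero_iff (by norm_num), norm_eq_zero] at h0
    rw [hu']
    simp
  · have h := hgen (1 / M)
    have he : 2 * (1 / M) * ‖u‖ ^ 2 - M * ((1 / M) ^ 2 * ‖u‖ ^ 2)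
        = (1 / M) * ‖u‖ ^ 2 := by field_simp; ring
    rw [he] at h
    have h2 := mul_le_mul_of_nonneg_left h (le_of_lt hMpos)
    calc ‖u‖ ^ 2 = M * ((1 / M) * ‖u‖ ^ 2) := by field_simp
      _ ≤ M * ⟪u, x - y⟫ := h2

end Aux

set_option maxHeartbeats 2000000 in
/-- Lemma 3 (contraction of the gradient step): for a differentiable, μ-strongly convex
and L-smooth function `f` on a real inner product space, a gradient step with step size
`β ≤ 2/(μ + L)` is a `(1 - μβ)`-contraction. -/
theorem gradient_step_contraction
    {E : Type*} [NormedAddCommGroup E] [InnerProductSpace ℝ E] [CompleteSpace E]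
    (f : E → ℝ) (μ L β : ℝ)
    (hdiff : Differentiable ℝ f)
    (hμ : 0 < μ) (hμL : μ ≤ L)
    (hstrong : ∀ x y : E,
      f y ≥ f x + ⟪gradient f x, y - x⟫ + (μ / 2) * ‖y - x‖ ^ 2)
    (hsmooth : ∀ x y : E, ‖gradient f x - gradient f y‖ ≤ L * ‖x - y‖)
    (hβ0 : 0 < β) (hβ : β ≤ 2 / (μ + L)) :
    ∀ x₁ x₂ : E,
      ‖x₁ - x₂ - β • (gradient f x₁ - gradient f x₂)‖ ≤ (1 - μ * β) * ‖x₁ - x₂‖ := by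
  have hμL0 : 0 < μ + L := by linarith
  have hdesc : ∀ x y : E, f y ≤ f x + ⟪gradient f x, y - x⟫ + L / 2 * ‖y - x‖ ^ 2 :=
    descent_lemma f L (by linarith) hdiff hsmooth
  obtain ⟨g, hg⟩ : ∃ g : E → E, g = gradient f := ⟨_, rfl⟩
  rw [← hg] at hstrong hsmooth hdesc ⊢
  set φ : E → ℝ := fun z => f z - μ / 2 * ‖z‖ ^ 2 with hφ
  set p : E → E := fun z => g z - μ • z with hp
  have pz : ∀ z : E, p z = g z - μ • z := fun z => rfl
  have φz : ∀ z : E, φ z = f z - μ / 2 * ‖z‖ ^ 2 := fun z => rfl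
  have expand : ∀ x y : E, ⟪p x, y - x⟫ = ⟪g x, y - x⟫ - μ * ⟪x, y⟫ + μ * ‖x‖ ^ 2 := by
    intro x y
    rw [pz]
    simp only [inner_sub_left, inner_smul_left, inner_sub_right, RCLike.conj_to_real]
    rw [real_inner_self_eq_norm_sq]
    ring
  have hφconv : ∀ x y : E, φ y ≥ φ x + ⟪p x, y - x⟫ := by
    intro x y
    have h1 := hstrong x y
    have h2 : ‖y - x‖ ^ 2 = ‖y‖ ^ 2 - 2 * ⟪y, x⟫ + ‖x‖ ^ 2 := norm_sub_sq_real y x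
    have h3 : ⟪y, x⟫ = ⟪x, y⟫ := real_inner_comm x y
    rw [φz, φz, expand]
    nlinarith [h1]
  have hφdesc : ∀ x y : E, φ y ≤ φ x + ⟪p x, y - x⟫ + (L - μ) / 2 * ‖y - x‖ ^ 2 := by
    intro x y
    have h1 := hdesc x y
    have h2 : ‖y - x‖ ^ 2 = ‖y‖ ^ 2 - 2 * ⟪y, x⟫ + ‖x‖ ^ 2 := norm_sub_sq_real y x
    have h3 : ⟪y, x⟫ = ⟪x, y⟫ := real_inner_comm x y
    rw [φz, φz, expand]
    nlinarith [h1]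
  have hcoco : ∀ x y : E, (L - μ) * ⟪p x - p y, x - y⟫ ≥ ‖p x - p y‖ ^ 2 :=
    cocoercivity φ p (L - μ) (by linarith) hφconv hφdesc
  have hmono : ∀ x y : E, ⟪g x - g y, x - y⟫ ≥ μ * ‖x - y‖ ^ 2 := by
    intro x y
    have h1 := hstrong x y
    have h2 := hstrong y x
    have e1 : ⟪g y, x - y⟫ = - ⟪g y, y - x⟫ := by
      rw [show x - y = -(y - x) by abel, inner_neg_right]
    have e2 : ⟪g x - g y, x - y⟫ = ⟪g x, x - y⟫ - ⟪g y, x - y⟫ := inner_sub_left _ _ _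
    have e3 : ⟪g x, x - y⟫ = - ⟪g x, y - x⟫ := by
      rw [show x - y = -(y - x) by abel, inner_neg_right]
    have e4 : ‖x - y‖ = ‖y - x‖ := norm_sub_rev x y
    rw [e2, e3, e1, e4]
    rw [e1, e4] at h2
    linarith [h1, h2]
  intro x₁ x₂
  obtain ⟨d, hd⟩ : ∃ d : E, d = x₁ - x₂ := ⟨_, rfl⟩
  obtain ⟨G, hG⟩ : ∃ G : E, G = g x₁ - g x₂ := ⟨_, rfl⟩
  rw [show x₁ - x₂ - β • (g x₁ - g x₂) = d - β • G by rw [hd, hG], ← hd]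
  have hkey : (μ + L) * ⟪G, d⟫ ≥ μ * L * ‖d‖ ^ 2 + ‖G‖ ^ 2 := by
    have h := hcoco x₁ x₂
    have e1 : p x₁ - p x₂ = G - μ • d := by
      rw [pz, pz, hG, hd, smul_sub]
      abel
    rw [e1, ← hd] at h
    have e2 : ⟪G - μ • d, d⟫ = ⟪G, d⟫ - μ * ‖d‖ ^ 2 := by
      rw [inner_sub_left, inner_smul_left, RCLike.conj_to_real, real_inner_self_eq_norm_sq]
    have e3 : ‖G - μ • d‖ ^ 2 = ‖G‖ ^ 2 - 2 * (μ * ⟪G, d⟫) + μ ^ 2 * ‖d‖ ^ 2 := by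
      rw [norm_sub_sq_real, inner_smul_right, norm_smul]
      simp only [Real.norm_eq_abs, mul_pow, sq_abs]
    rw [e2, e3] at h
    nlinarith [h]
  have hmono' : ⟪G, d⟫ ≥ μ * ‖d‖ ^ 2 := by
    have := hmono x₁ x₂
    rwa [← hG, ← hd] at this
  have hCS : ⟪G, d⟫ * ⟪G, d⟫ ≤ ‖G‖ ^ 2 * ‖d‖ ^ 2 := by
    have := real_inner_mul_inner_self_le G d
    rwa [real_inner_self_eq_norm_sq, real_inner_self_eq_norm_sq] at this
  have hGd : ‖G‖ ^ 2 ≥ μ ^ 2 * ‖d‖ ^ 2 := by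
    rcases eq_or_lt_of_le (norm_nonneg d) with h0 | hpos
    · rw [← h0]
      simp
    · have hd2 : 0 < ‖d‖ ^ 2 := by positivity
      have hq : μ * ‖d‖ ^ 2 * (μ * ‖d‖ ^ 2) ≤ ⟪G, d⟫ * ⟪G, d⟫ :=
        mul_self_le_mul_self (by positivity) hmono'
      nlinarith [hq, hCS, hd2]
  have hβ' : β * (μ + L) ≤ 2 := (le_div_iff₀ hμL0).mp hβ
  have hμβ : μ * β ≤ 1 := by nlinarith [hβ']
  have hexp : ‖d - β • G‖ ^ 2 = ‖d‖ ^ 2 - 2 * (β * ⟪G, d⟫) + β ^ 2 * ‖G‖ ^ 2 := by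
    rw [norm_sub_sq_real, inner_smul_right, norm_smul, real_inner_comm]
    simp only [Real.norm_eq_abs, mul_pow, sq_abs]
  have hsq : ‖d - β • G‖ ^ 2 ≤ ((1 - μ * β) * ‖d‖) ^ 2 := by
    rw [hexp]
    have hA : 0 ≤ 2 * β * ((μ + L) * ⟪G, d⟫ - (μ * L * ‖d‖ ^ 2 + ‖G‖ ^ 2)) := by
      apply mul_nonneg (by linarith)
      linarith [hkey]
    have hB : 0 ≤ (2 - β * (μ + L)) * β * (‖G‖ ^ 2 - μ ^ 2 * ‖d‖ ^ 2) := by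
      apply mul_nonneg (mul_nonneg (by linarith) (le_of_lt hβ0))
      linarith [hGd]
    nlinarith [hA, hB, hμL0, sq_nonneg ‖d‖]
  have h1 : 0 ≤ (1 - μ * β) * ‖d‖ := mul_nonneg (by linarith) (norm_nonneg d)
  exact (pow_le_pow_iff_left₀ (norm_nonneg _) h1 (by norm_num)).mp hsq
end

section
/- Let E be a real inner product space, n ≥ 1, and for each i ∈ Fin n let fᵢ : E → ℝ be differentiable, μᵢ-strongly convex (μᵢ > 0), and with Lᵢ-Lipschitz gradient. Set L = ∑ᵢ Lᵢ, μ = minᵢ μᵢ, assume μ ≤ L, and assume the sum F = ∑ᵢ fᵢ is μ-strongly convex and has L-Lipschitz gradient. Let x* ∈ E satisfy ∇F(x*) = 0. Let Δ ≥ 0 and let the step size α satisfy 0 < α ≤ 2n/(μ + L). Suppose points xᵢ, x̂ ∈ E satisfy ‖xᵢ − x̂‖ ≤ 4Δ for all i, and let e ∈ E with ‖e‖ ≤ 2Δ. Define the updated average x̂⁺ = x̂ − (α/n)·∑ᵢ ∇fᵢ(xᵢ) + e. Then ‖x̂⁺ − x*‖ ≤ (1 − αμ/n)·‖x̂ − x*‖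 + (4αL/n + 2)·Δ. -/
open RealInnerProductSpace

section Aux

variable {E : Type*} [NormedAddCommGroup E] [InnerProductSpace ℝ E] [CompleteSpace E]

lemma qgd_grad_cont {f : E → ℝ} {L : ℝ}
    (hlip : ∀ a b : E, ‖gradient f a - gradient f b‖ ≤ L * ‖a - b‖) :
    Continuous (gradient f) := by
  have : LipschitzWith ⟨max L 0, le_max_right _ _⟩ (gradient f) := by
    apply LipschitzWith.of_dist_le_mul
    intro a b
    rw [dist_eq_norm, dist_eq_norm]
    calc ‖gradient f a - gradient f b‖ ≤ L * ‖a - b‖ := hlip a b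
      _ ≤ max L 0 * ‖a - b‖ :=
        mul_le_mul_of_nonneg_right (le_max_left _ _) (norm_nonneg _)
  exact this.continuous

lemma qgd_descent {f : E → ℝ} {L : ℝ} (hdiff : Differentiable ℝ f)
    (hlip : ∀ a b : E, ‖gradient f a - gradient f b‖ ≤ L * ‖a - b‖) (x y : E) :
    f y ≤ f x + ⟪gradient f x, y - x⟫ + L / 2 * ‖y - x‖ ^ 2 := by
  set d := y - x with hd
  have hc : Continuous fun t : ℝ => x + t • d := by continuity
  have hder : ∀ t : ℝ, HasDerivAt (fun t : ℝ => f (x + t • d))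
      ⟪gradient f (x + t • d), d⟫ t := by
    intro t
    have h1 : HasDerivAt (fun t : ℝ => x + t • d) d t := by
      simpa using ((hasDerivAt_id t).smul_const d).const_add x
    have h2 := ((hdiff (x + t • d)).hasGradientAt).hasFDerivAt
    have := h2.comp_hasDerivAt t h1
    simpa [InnerProductSpace.toDual_apply_apply, Function.comp_def] using this
  have hcontψ : Continuous fun t : ℝ => ⟪gradient f (x + t • d), d⟫ :=
    ((qgd_grad_cont hlip).comp hc).inner continuous_const
  have hint : ∫ t in (0:ℝ)..1, ⟪gradient f (x + t • d), d⟫ =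
      f (x + (1:ℝ) • d) - f (x + (0:ℝ) • d) := by
    apply intervalIntegral.integral_eq_sub_of_hasDerivAt (fun t _ => hder t)
    exact hcontψ.intervalIntegrable 0 1
  have hxy : x + (1:ℝ) • d = y := by rw [one_smul, hd]; abel
  have hx0 : x + (0:ℝ) • d = x := by rw [zero_smul, add_zero]
  rw [hxy, hx0] at hint
  have hb : ∫ t in (0:ℝ)..1, ⟪gradient f (x + t • d), d⟫ ≤
      ∫ t in (0:ℝ)..1, (⟪gradient f x, d⟫ + L * ‖d‖ ^ 2 * t) := by
    apply intervalIntegral.integral_mono_on (by norm_num)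
    · exact hcontψ.intervalIntegrable 0 1
    · exact (Continuous.intervalIntegrable (by continuity) 0 1)
    · intro t ht
      rcases ht with ⟨ht0, ht1⟩
      have e1 : ⟪gradient f (x + t • d), d⟫ - ⟪gradient f x, d⟫
          = ⟪gradient f (x + t • d) - gradient f x, d⟫ := by
        rw [inner_sub_left]
      have e2 : ⟪gradient f (x + t • d) - gradient f x, d⟫
          ≤ ‖gradient f (x + t • d) - gradient f x‖ * ‖d‖ := real_inner_le_norm _ _
      have e3 : ‖gradient f (x + t • d) - gradient f x‖ ≤ L * (t * ‖d‖) := by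
        have := hlip (x + t • d) x
        simpa [norm_smul, abs_of_nonneg ht0] using this
      have e4 : ‖gradient f (x + t • d) - gradient f x‖ * ‖d‖ ≤ L * (t * ‖d‖) * ‖d‖ :=
        mul_le_mul_of_nonneg_right e3 (norm_nonneg _)
      nlinarith [norm_nonneg d]
  have hval : ∫ t in (0:ℝ)..1, (⟪gradient f x, d⟫ + L * ‖d‖ ^ 2 * t)
      = ⟪gradient f x, d⟫ + L / 2 * ‖d‖ ^ 2 := by
    rw [intervalIntegral.integral_add (intervalIntegrable_const)
      (Continuous.intervalIntegrable (by continuity : Continuous fun t : ℝ => L * ‖d‖ ^ 2 * t) 0 1)]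
    rw [intervalIntegral.integral_const_mul, integral_id]
    simp
    ring
  rw [hint, hval] at hb
  linarith

lemma qgd_coco {F : E → ℝ} {μ L : ℝ} (hμ0 : 0 < μ) (hμL : μ ≤ L)
    (hstrong : ∀ x y : E, F y ≥ F x + ⟪gradient F x, y - x⟫ + (μ / 2) * ‖y - x‖ ^ 2)
    (hdesc : ∀ x y : E, F y ≤ F x + ⟪gradient F x, y - x⟫ + L / 2 * ‖y - x‖ ^ 2)
    (hsmooth : ∀ x y : E, ‖gradient F x - gradient F y‖ ≤ L * ‖x - y‖)
    (x y : E) :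
    ‖gradient F y - gradient F x‖ ^ 2 + μ * L * ‖y - x‖ ^ 2 ≤
      (μ + L) * ⟪gradient F y - gradient F x, y - x⟫ := by
  set gx := gradient F x with hgx
  set gy := gradient F y with hgy
  set g := gy - gx with hg
  set d := y - x with hd
  clear_value gx gy g d
  -- strong monotonicity
  have hmono : μ * ‖d‖ ^ 2 ≤ ⟪g, d⟫ := by
    have h1 := hstrong x y
    have h2 := hstrong y x
    have e2 : ⟪gy, x - y⟫ = -⟪gy, d⟫ := by
      rw [hd, ← neg_sub y x, inner_neg_right]
    have e3 : ‖x - y‖ = ‖d‖ := by rw [hd, norm_sub_rev]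
    rw [← hgx, ← hd] at h1
    rw [← hgy, e3] at h2
    have e1 : ⟪g, d⟫ = ⟪gy, d⟫ - ⟪gx, d⟫ := by rw [hg, inner_sub_left]
    linarith
  rcases eq_or_lt_of_le hμL with hEq | hlt
  · -- μ = L
    have hs : ‖g‖ ≤ L * ‖d‖ := by
      have h := hsmooth y x
      rw [← hgx, ← hgy, ← hg, ← hd] at h
      exact h
    have hs2 : ‖g‖ * ‖g‖ ≤ (L * ‖d‖) * (L * ‖d‖) :=
      mul_self_le_mul_self (norm_nonneg _) hs
    subst hEq
    nlinarith [norm_nonneg g, norm_nonneg d]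
  · -- μ < L
    set K := L - μ with hKdef
    have hK : 0 < K := by simp [hKdef]; linarith
    have hKinv : K * K⁻¹ = 1 := mul_inv_cancel₀ (ne_of_gt hK)
    have iden : ∀ a b : E, ⟪gradient F a - μ • a, b - a⟫ =
        ⟪gradient F a, b - a⟫ + μ / 2 * ‖b - a‖ ^ 2
          - (μ / 2 * ‖b‖ ^ 2 - μ / 2 * ‖a‖ ^ 2) := by
      intro a b
      have q1 : ⟪a, b - a⟫ = ⟪a, b⟫ - ‖a‖ ^ 2 := by
        rw [inner_sub_right]
        try rw [real_inner_self_eq_norm_sq]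
      have q2 : ‖b - a‖ ^ 2 = ‖b‖ ^ 2 - 2 * ⟪a, b⟫ + ‖a‖ ^ 2 := by
        rw [norm_sub_sq_real, real_inner_comm]
        try ring
      rw [inner_sub_left, real_inner_smul_left, q1, q2]
      ring
    have C1 : ∀ a b : E, F a - μ / 2 * ‖a‖ ^ 2 + ⟪gradient F a - μ • a, b - a⟫ ≤
        F b - μ / 2 * ‖b‖ ^ 2 := by
      intro a b
      have h := hstrong a b
      have i := iden a b
      linarith
    have C2 : ∀ a b : E, F b - μ / 2 * ‖b‖ ^ 2 ≤
        F a - μ / 2 * ‖a‖ ^ 2 + ⟪gradient F a - μ • a, b - a⟫ + K / 2 * ‖b - a‖ ^ 2 := by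
      intro a b
      have h := hdesc a b
      have i := iden a b
      have : K / 2 * ‖b - a‖ ^ 2 = L / 2 * ‖b - a‖ ^ 2 - μ / 2 * ‖b - a‖ ^ 2 := by
        rw [hKdef]; ring
      linarith
    set wx := gx - μ • x with hwx
    set wy := gy - μ • y with hwy
    set w := wy - wx with hw
    set z1 := y - K⁻¹ • w with hz1
    set z2 := x + K⁻¹ • w with hz2
    clear_value K wx wy w z1 z2
    have I1 := (C1 x z1).trans (C2 y z1)
    have I2 := (C1 y z2).trans (C2 x z2)
    rw [← hgx, ← hwx, ← hgy, ← hwy] at I1 I2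
    have a1 : ⟪wx, z1 - x⟫ = ⟪wx, y - x⟫ - K⁻¹ * ⟪wx, w⟫ := by
      have : z1 - x = (y - x) - K⁻¹ • w := by rw [hz1]; abel
      rw [this, inner_sub_right, real_inner_smul_right]
    have a2 : ⟪wy, z1 - y⟫ = -(K⁻¹ * ⟪wy, w⟫) := by
      have : z1 - y = -(K⁻¹ • w) := by rw [hz1]; abel
      rw [this, inner_neg_right, real_inner_smul_right]
    have a3 : ‖z1 - y‖ ^ 2 = K⁻¹ ^ 2 * ‖w‖ ^ 2 := by
      have : z1 - y = -(K⁻¹ • w) := by rw [hz1]; abel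
      rw [this, norm_neg, norm_smul]
      rw [Real.norm_eq_abs, abs_of_nonneg (inv_nonneg.2 hK.le)]
      ring
    have a4 : ⟪wy, z2 - y⟫ = ⟪wy, x - y⟫ + K⁻¹ * ⟪wy, w⟫ := by
      have : z2 - y = (x - y) + K⁻¹ • w := by rw [hz2]; abel
      rw [this, inner_add_right, real_inner_smul_right]
    have a5 : ⟪wx, z2 - x⟫ = K⁻¹ * ⟪wx, w⟫ := by
      have : z2 - x = K⁻¹ • w := by rw [hz2]; abel
      rw [this, real_inner_smul_right]
    have a6 : ‖z2 - x‖ ^ 2 = K⁻¹ ^ 2 * ‖w‖ ^ 2 := by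
      have : z2 - x = K⁻¹ • w := by rw [hz2]; abel
      rw [this, norm_smul, Real.norm_eq_abs, abs_of_nonneg (inv_nonneg.2 hK.le)]
      ring
    have a7 : ⟪wy, w⟫ - ⟪wx, w⟫ = ‖w‖ ^ 2 := by
      rw [← inner_sub_left, ← hw, real_inner_self_eq_norm_sq]
    have a8 : ⟪wy, x - y⟫ = -⟪wy, y - x⟫ := by
      rw [← neg_sub y x, inner_neg_right]
    have a9 : ⟪wy, y - x⟫ - ⟪wx, y - x⟫ = ⟪w, y - x⟫ := by
      rw [← inner_sub_left, ← hw]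
    have hKK : K / 2 * (K⁻¹ ^ 2 * ‖w‖ ^ 2) = K⁻¹ * ‖w‖ ^ 2 / 2 := by
      field_simp
    have a7' : K⁻¹ * ⟪wy, w⟫ - K⁻¹ * ⟪wx, w⟫ = K⁻¹ * ‖w‖ ^ 2 := by
      rw [← mul_sub, a7]
    have key : K⁻¹ * ‖w‖ ^ 2 ≤ ⟪w, y - x⟫ := by
      rw [a1, a2, a3] at I1
      rw [a4, a5, a6] at I2
      rw [hKK] at I1 I2
      linarith [I1, I2, a7', a8, a9]
    -- expand w
    have hwgd : w = g - μ • d := by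
      rw [hw, hwy, hwx, hg, hd, smul_sub]; abel
    have b1 : ‖w‖ ^ 2 = ‖g‖ ^ 2 - 2 * (μ * ⟪g, d⟫) + μ ^ 2 * ‖d‖ ^ 2 := by
      rw [hwgd, norm_sub_sq_real, real_inner_smul_right, norm_smul,
        Real.norm_eq_abs, abs_of_nonneg hμ0.le]
      ring
    have b2 : ⟪w, d⟫ = ⟪g, d⟫ - μ * ‖d‖ ^ 2 := by
      rw [hwgd, inner_sub_left, real_inner_smul_left, real_inner_self_eq_norm_sq]
    have key2 : ‖w‖ ^ 2 ≤ K * ⟪w, d⟫ := by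
      have := mul_le_mul_of_nonneg_left key hK.le
      rw [← mul_assoc, hKinv, one_mul] at this
      rw [← hd] at this
      exact this
    rw [b1, b2] at key2
    have heq : K * (⟪g, d⟫ - μ * ‖d‖ ^ 2) = (L - μ) * ⟪g, d⟫ - (L - μ) * μ * ‖d‖ ^ 2 := by
      rw [hKdef]; ring
    rw [heq] at key2
    linarith [key2]

end Aux

/-- One-step contraction of the quantized averaged gradient descent iteration. -/
theorem quantized_gradient_descent_one_step
    {E : Type*} [NormedAddCommGroup E] [InnerProductSpace ℝ E] [CompleteSpace E]
    (n : ℕ) (hn : 1 ≤ n)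
    (f : Fin n → E → ℝ) (μloc Lloc : Fin n → ℝ)
    (hdiff : ∀ i, Differentiable ℝ (f i))
    (hμloc : ∀ i, 0 < μloc i)
    (hstrongloc : ∀ i, ∀ x y : E,
      f i y ≥ f i x + ⟪gradient (f i) x, y - x⟫ + (μloc i / 2) * ‖y - x‖ ^ 2)
    (hsmoothloc : ∀ i, ∀ x y : E,
      ‖gradient (f i) x - gradient (f i) y‖ ≤ Lloc i * ‖x - y‖)
    (L μ : ℝ) (hL : L = ∑ i, Lloc i) (hμ : μ = ⨅ i, μloc i) (hμL : μ ≤ L)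
    (F : E → ℝ) (hF : F = fun y => ∑ i, f i y)
    (hstrong : ∀ x y : E,
      F y ≥ F x + ⟪gradient F x, y - x⟫ + (μ / 2) * ‖y - x‖ ^ 2)
    (hsmooth : ∀ x y : E, ‖gradient F x - gradient F y‖ ≤ L * ‖x - y‖)
    (xstar : E) (hxstar : gradient F xstar = 0)
    (Δ : ℝ) (hΔ : 0 ≤ Δ)
    (α : ℝ) (hα0 : 0 < α) (hα : α ≤ 2 * n / (μ + L))
    (x : Fin n → E) (xhat : E) (hx : ∀ i, ‖x i - xhat‖ ≤ 4 * Δ)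
    (e : E) (he : ‖e‖ ≤ 2 * Δ)
    (xhatnext : E) (hxhatnext : xhatnext = xhat - (α / n) • (∑ i, gradient (f i) (x i)) + e) :
    ‖xhatnext - xstar‖ ≤ (1 - α * μ / n) * ‖xhat - xstar‖ + (4 * α * L / n + 2) * Δ := by
  have hnR : (1:ℝ) ≤ (n:ℝ) := by exact_mod_cast hn
  have hnpos : (0:ℝ) < n := by linarith
  have : Nonempty (Fin n) := ⟨⟨0, hn⟩⟩
  obtain ⟨i₀, hi₀⟩ := Finite.exists_min μloc
  have hμpos : 0 < μ := by
    rw [hμ]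
    exact lt_of_lt_of_le (hμloc i₀) (le_ciInf hi₀)
  have hLpos : 0 < L := lt_of_lt_of_le hμpos hμL
  have hμLpos : 0 < μ + L := by linarith
  rcases subsingleton_or_nontrivial E with hsub | hnt
  · -- subsingleton case
    have h1 : xhatnext - xstar = (0 : E) := Subsingleton.elim _ _
    have h2 : xhat - xstar = (0 : E) := Subsingleton.elim _ _
    rw [h1, h2, norm_zero]
    have h3 : 0 ≤ 4 * α * L / n :=
      div_nonneg (mul_nonneg (mul_nonneg (by norm_num) hα0.le) hLpos.le) hnpos.le
    have h4 : 0 ≤ (4 * α * L / n + 2) * Δ := mul_nonneg (by linarith) hΔ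
    linarith
  · -- nontrivial case
    have hLloc : ∀ i, 0 ≤ Lloc i := by
      intro i
      obtain ⟨v, hv⟩ := exists_ne (0 : E)
      have h2 : 0 ≤ Lloc i * ‖v - 0‖ :=
        le_trans (norm_nonneg _) (hsmoothloc i v 0)
      have h3 : 0 < ‖v - 0‖ := by
        rw [sub_zero]
        exact norm_pos_iff.mpr hv
      exact (mul_nonneg_iff_of_pos_right h3).mp h2
    have hdiffF : Differentiable ℝ F := by
      rw [hF]
      exact Differentiable.fun_sum (fun i _ => hdiff i)
    have hgradF : ∀ z : E, gradient F z = ∑ i, gradient (f i) z := by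
      intro z
      have h1 : HasFDerivAt F (∑ i, (InnerProductSpace.toDual ℝ E) (gradient (f i) z)) z := by
        rw [hF]
        exact HasFDerivAt.fun_sum (fun i _ => ((hdiff i z).hasGradientAt).hasFDerivAt)
      have h2 : HasGradientAt F (∑ i, gradient (f i) z) z := by
        rw [hasGradientAt_iff_hasFDerivAt, map_sum]
        exact h1
      exact h2.gradient
    have hdesc := qgd_descent hdiffF hsmooth
    set β := α / n with hβ
    have hβpos : 0 < β := div_pos hα0 hnpos
    have hβ2 : β * (μ + L) ≤ 2 := by
      have h := (le_div_iff₀ hμLpos).mp hα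
      rw [hβ, div_mul_eq_mul_div, div_le_iff₀ hnpos]
      linarith
    have hβμ : β * μ ≤ 1 := by nlinarith [mul_nonneg hβpos.le (sub_nonneg.mpr hμL)]
    set g := gradient F xhat with hgdef
    set d := xhat - xstar with hddef
    have cc : ‖g‖ ^ 2 + μ * L * ‖d‖ ^ 2 ≤ (μ + L) * ⟪g, d⟫ := by
      have := qgd_coco hμpos hμL hstrong hdesc hsmooth xstar xhat
      rw [hxstar] at this
      rw [sub_zero] at this
      rw [← hgdef, ← hddef] at this
      exact this
    have hgd : μ * ‖d‖ ≤ ‖g‖ := by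
      rcases eq_or_lt_of_le (norm_nonneg d) with hd0 | hd0
      · rw [← hd0, mul_zero]; exact norm_nonneg g
      · have hsm := hsmooth xhat xstar
        rw [hxstar, sub_zero, ← hgdef, ← hddef] at hsm
        have hcs : ⟪g, d⟫ ≤ ‖g‖ * ‖d‖ := real_inner_le_norm g d
        have hmono : μ * ‖d‖ ^ 2 ≤ ⟪g, d⟫ := by
          have h1 := hstrong xstar xhat
          have h2 := hstrong xhat xstar
          rw [hxstar] at h1
          have e0 : ⟪(0:E), xhat - xstar⟫ = 0 := inner_zero_left _
          have e2 : ⟪g, xstar - xhat⟫ = -⟪g, d⟫ := by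
            rw [hddef, ← neg_sub xhat xstar, inner_neg_right]
          have e3 : ‖xstar - xhat‖ = ‖d‖ := by rw [hddef, norm_sub_rev]
          rw [e0, ← hddef] at h1
          rw [← hgdef, e2, e3] at h2
          linarith
        nlinarith [hmono, hcs, hd0]
    have contraction : ‖d - β • g‖ ≤ (1 - β * μ) * ‖d‖ := by
      have hexp : ‖d - β • g‖ ^ 2 =
          ‖d‖ ^ 2 - 2 * (β * ⟪g, d⟫) + β ^ 2 * ‖g‖ ^ 2 := by
        rw [norm_sub_sq_real, real_inner_smul_right, norm_smul,
          Real.norm_eq_abs, abs_of_nonneg hβpos.le, real_inner_comm]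
        ring
      have hint1 : 0 ≤ β * ((μ + L) * ⟪g, d⟫ - (‖g‖ ^ 2 + μ * L * ‖d‖ ^ 2)) :=
        mul_nonneg hβpos.le (by linarith)
      have hint2 : 0 ≤ (β * (2 - β * (μ + L))) * (‖g‖ ^ 2 - (μ * ‖d‖) ^ 2) := by
        apply mul_nonneg (mul_nonneg hβpos.le (by linarith))
        nlinarith [hgd, mul_nonneg hμpos.le (norm_nonneg d)]
      have id1 : (μ + L) * (((1 - β * μ) * ‖d‖) ^ 2 -
          (‖d‖ ^ 2 - 2 * (β * ⟪g, d⟫) + β ^ 2 * ‖g‖ ^ 2)) =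
          2 * (β * ((μ + L) * ⟪g, d⟫ - (‖g‖ ^ 2 + μ * L * ‖d‖ ^ 2)))
          + (β * (2 - β * (μ + L))) * (‖g‖ ^ 2 - (μ * ‖d‖) ^ 2) := by
        ring
      have hprod : 0 ≤ (μ + L) * (((1 - β * μ) * ‖d‖) ^ 2 -
          (‖d‖ ^ 2 - 2 * (β * ⟪g, d⟫) + β ^ 2 * ‖g‖ ^ 2)) := by
        rw [id1]; linarith
      have hsq : ‖d - β • g‖ ^ 2 ≤ ((1 - β * μ) * ‖d‖) ^ 2 := by
        rw [hexp]
        have := (mul_nonneg_iff_of_pos_left hμLpos).mp hprod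
        linarith
      have hpos1 : 0 ≤ (1 - β * μ) * ‖d‖ :=
        mul_nonneg (by linarith) (norm_nonneg _)
      have := Real.sqrt_le_sqrt hsq
      rwa [Real.sqrt_sq (norm_nonneg _), Real.sqrt_sq hpos1] at this
    -- error decomposition
    have hdecomp : xhatnext - xstar =
        (d - β • g) + (β • (g - ∑ i, gradient (f i) (x i)) + e) := by
      rw [hxhatnext, hddef, hgdef, smul_sub]
      abel
    have hsumbound : ‖g - ∑ i, gradient (f i) (x i)‖ ≤ 4 * Δ * L := by
      rw [hgdef, hgradF xhat, ← Finset.sum_sub_distrib]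
      calc ‖∑ i, (gradient (f i) xhat - gradient (f i) (x i))‖
          ≤ ∑ i, ‖gradient (f i) xhat - gradient (f i) (x i)‖ := norm_sum_le _ _
        _ ≤ ∑ i, Lloc i * (4 * Δ) := by
            apply Finset.sum_le_sum
            intro i _
            calc ‖gradient (f i) xhat - gradient (f i) (x i)‖
                ≤ Lloc i * ‖xhat - x i‖ := hsmoothloc i xhat (x i)
              _ ≤ Lloc i * (4 * Δ) := by
                  apply mul_le_mul_of_nonneg_left _ (hLloc i)
                  rw [norm_sub_rev]
                  exact hx i
        _ = (∑ i, Lloc i) * (4 * Δ) := by rw [Finset.sum_mul]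
        _ = 4 * Δ * L := by rw [← hL]; ring
    have htri : ‖xhatnext - xstar‖ ≤
        ‖d - β • g‖ + (β * ‖g - ∑ i, gradient (f i) (x i)‖ + ‖e‖) := by
      rw [hdecomp]
      calc ‖(d - β • g) + (β • (g - ∑ i, gradient (f i) (x i)) + e)‖
          ≤ ‖d - β • g‖ + ‖β • (g - ∑ i, gradient (f i) (x i)) + e‖ := norm_add_le _ _
        _ ≤ ‖d - β • g‖ + (‖β • (g - ∑ i, gradient (f i) (x i))‖ + ‖e‖) := by
            linarith [norm_add_le (β • (g - ∑ i, gradient (f i) (x i))) e]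
        _ = ‖d - β • g‖ + (β * ‖g - ∑ i, gradient (f i) (x i)‖ + ‖e‖) := by
            rw [norm_smul, Real.norm_eq_abs, abs_of_nonneg hβpos.le]
    have hberr : β * ‖g - ∑ i, gradient (f i) (x i)‖ ≤ β * (4 * Δ * L) :=
      mul_le_mul_of_nonneg_left hsumbound hβpos.le
    have heq1 : 1 - β * μ = 1 - α * μ / n := by rw [hβ]; ring
    have heq2 : β * (4 * Δ * L) + 2 * Δ = (4 * α * L / n + 2) * Δ := by
      rw [hβ]; ring
    have hdn : ‖d‖ = ‖xhat - xstar‖ := by rw [hddef]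
    rw [← heq2, ← heq1, ← hdn]
    linarith [contraction, htri, hberr, he]
end

section
/- Let E be a real inner product space, n ≥ 1, and for each i ∈ Fin n let fᵢ : E → ℝ be differentiable, μᵢ-strongly convex (μᵢ > 0), and with Lᵢ-Lipschitz gradient. Set L = ∑ᵢ Lᵢ, μ = minᵢ μᵢ, assume 0 < μ ≤ L, and assume F = ∑ᵢ fᵢ is μ-strongly convex and has L-Lipschitz gradient, with ∇F(x*) = 0. Let Δ ≥ 0 and 0 < α ≤ 2n/(μ + L). Suppose sequences x̂ : ℕ → E, xᵢ : ℕ → E (i ∈ Fin n), and e : ℕ → E satisfy, for all k: x̂[k+1] = x̂[k] − (α/n)·∑ᵢ ∇fᵢ(xᵢ[k]) + e[k+1], ‖e[k+1]‖ ≤ 2Δ, and ‖xᵢ[k] − x̂[k]‖ ≤ 4Δ for all i. Set ϑ = 1 − αμ/n and C = (4αL/n + 2)·Δ. Then for every k ≥ 0: ‖x̂[k] − x*‖ ≤ ϑᵏ·‖x̂[0] − x*‖ + ((1 − ϑᵏ)/(1 − ϑ))·C. -/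
set_option maxHeartbeats 1000000

open RealInnerProductSpace

section QGDAux
variable {E : Type*} [NormedAddCommGroup E] [InnerProductSpace ℝ E] [CompleteSpace E]
variable {E : Type*} [NormedAddCommGroup E] [InnerProductSpace ℝ E] [CompleteSpace E]

lemma line_deriv (f : E → ℝ) (hd : Differentiable ℝ f) (x v : E) (t : ℝ) :
    HasDerivAt (fun s : ℝ => f (x + s • v)) ⟪gradient f (x + t • v), v⟫ t := by
  have hc : HasDerivAt (fun s : ℝ => x + s • v) v t := by
    simpa using ((hasDerivAt_id t).smul_const v).const_add x
  have hf : HasFDerivAt f (InnerProductSpace.toDual ℝ E (gradient f (x + t • v))) (x + t • v) :=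
    (hd (x + t • v)).hasGradientAt
  simpa [InnerProductSpace.toDual_apply_apply, Function.comp_def] using hf.comp_hasDerivAt t hc

lemma descent (f : E → ℝ) (hd : Differentiable ℝ f) (K : ℝ) (hK : 0 ≤ K)
    (hlip : ∀ x y, ‖gradient f x - gradient f y‖ ≤ K * ‖x - y‖) (x y : E) :
    f y ≤ f x + ⟪gradient f x, y - x⟫ + K / 2 * ‖y - x‖ ^ 2 := by
  set v := y - x with hv
  set ψ : ℝ → ℝ := fun t => f (x + t • v) - t * ⟪gradient f x, v⟫ - K / 2 * t ^ 2 * ‖v‖ ^ 2 with hψ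
  have hder : ∀ t : ℝ,
      HasDerivAt ψ (⟪gradient f (x + t • v), v⟫ - ⟪gradient f x, v⟫ - K * t * ‖v‖ ^ 2) t := by
    intro t
    have h1 := line_deriv f hd x v t
    have h2 : HasDerivAt (fun s : ℝ => s * ⟪gradient f x, v⟫) ⟪gradient f x, v⟫ t := by
      simpa using (hasDerivAt_id t).mul_const ⟪gradient f x, v⟫
    have h3 : HasDerivAt (fun s : ℝ => K / 2 * s ^ 2 * ‖v‖ ^ 2) (K * t * ‖v‖ ^ 2) t := by
      have := ((hasDerivAt_pow 2 t).const_mul (K / 2)).mul_const (‖v‖ ^ 2)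
      exact this.congr_deriv (by ring)
    exact (h1.sub h2).sub h3
  have hanti : AntitoneOn ψ (Set.Icc (0 : ℝ) 1) := by
    apply antitoneOn_of_deriv_nonpos (convex_Icc 0 1)
    · exact fun t _ => ((hder t).differentiableAt).continuousAt.continuousWithinAt
    · exact fun t _ => ((hder t).differentiableAt).differentiableWithinAt
    · intro t ht
      rw [interior_Icc] at ht
      rw [(hder t).deriv]
      have h1 : ⟪gradient f (x + t • v) - gradient f x, v⟫ ≤
          ‖gradient f (x + t • v) - gradient f x‖ * ‖v‖ := real_inner_le_norm _ _
      have h2 : ‖gradient f (x + t • v) - gradient f x‖ ≤ K * (t * ‖v‖) := by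
        have := hlip (x + t • v) x
        simpa [norm_smul, abs_of_pos ht.1] using this
      have h3 : ⟪gradient f (x + t • v), v⟫ - ⟪gradient f x, v⟫ =
          ⟪gradient f (x + t • v) - gradient f x, v⟫ := (inner_sub_left _ _ _).symm
      nlinarith [norm_nonneg v, ht.1.le]
  have hle := hanti (Set.left_mem_Icc.mpr zero_le_one) (Set.right_mem_Icc.mpr zero_le_one)
    zero_le_one
  have h0 : ψ 0 = f x := by simp [hψ]
  have h1 : ψ 1 = f y - ⟪gradient f x, v⟫ - K / 2 * ‖v‖ ^ 2 := by
    simp [hψ, hv]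
  rw [h0, h1] at hle
  linarith

lemma cocoercive (φ : E → ℝ) (G : E → E) (K : ℝ) (hK : 0 < K)
    (hconv : ∀ x y, φ x + ⟪G x, y - x⟫ ≤ φ y)
    (hdesc : ∀ x y, φ y ≤ φ x + ⟪G x, y - x⟫ + K / 2 * ‖y - x‖ ^ 2) (x y : E) :
    (1 / K) * ‖G x - G y‖ ^ 2 ≤ ⟪G x - G y, x - y⟫ := by
  have breg : ∀ a b : E, φ a + ⟪G a, b - a⟫ + 1 / (2 * K) * ‖G b - G a‖ ^ 2 ≤ φ b := by
    intro a b
    set g := G b - G a with hg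
    set z := b - (1 / K) • g with hz
    have h1 := hconv a z
    have h2 := hdesc b z
    have hza : z - a = (b - a) - (1 / K) • g := by rw [hz]; abel
    have hzb : z - b = -((1 / K) • g) := by rw [hz]; abel
    rw [hza] at h1
    rw [hzb] at h2
    have e1 : ⟪G a, b - a - (1 / K) • g⟫ = ⟪G a, b - a⟫ - (1 / K) * ⟪G a, g⟫ := by
      rw [inner_sub_right, real_inner_smul_right]
    have e2 : ⟪G b, -((1 / K) • g)⟫ = -((1 / K) * ⟪G b, g⟫) := by
      rw [inner_neg_right, real_inner_smul_right]
    have e3 : ‖-((1 / K) • g)‖ ^ 2 = (1 / K) ^ 2 * ‖g‖ ^ 2 := by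
      rw [norm_neg, norm_smul]
      simp [abs_of_pos (by positivity : (0:ℝ) < 1 / K), mul_pow]
    rw [e1] at h1
    rw [e2, e3] at h2
    have e4 : ⟪G b, g⟫ - ⟪G a, g⟫ = ‖g‖ ^ 2 := by
      rw [← inner_sub_left, ← hg, real_inner_self_eq_norm_sq]
    have hK' : K ≠ 0 := ne_of_gt hK
    have : φ a + ⟪G a, b - a⟫ - (1 / K) * ⟪G a, g⟫ ≤
        φ b - (1 / K) * ⟪G b, g⟫ + K / 2 * ((1 / K) ^ 2 * ‖g‖ ^ 2) := by linarith
    have e5 : K / 2 * ((1 / K) ^ 2 * ‖g‖ ^ 2) = 1 / (2 * K) * ‖g‖ ^ 2 := by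
      field_simp
    rw [e5] at this
    have e6 : (1 / K) * ⟪G b, g⟫ - (1 / K) * ⟪G a, g⟫ = (1 / K) * ‖g‖ ^ 2 := by
      rw [← mul_sub, e4]
    have e7 : (1 / K) * ‖g‖ ^ 2 - 1 / (2 * K) * ‖g‖ ^ 2 = 1 / (2 * K) * ‖g‖ ^ 2 := by
      field_simp; ring
    linarith
  have b1 := breg x y
  have b2 := breg y x
  have e1 : ⟪G y, x - y⟫ = -⟪G y, y - x⟫ := by rw [← inner_neg_right]; congr 1; abel
  have e2 : ‖G x - G y‖ = ‖G y - G x‖ := by rw [← norm_neg]; congr 1; abel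
  have e3 : ⟪G x - G y, x - y⟫ = ⟪G x, x - y⟫ - ⟪G y, x - y⟫ := inner_sub_left _ _ _
  have e4 : ⟪G x, x - y⟫ = -⟪G x, y - x⟫ := by rw [← inner_neg_right]; congr 1; abel
  have hK2 : 1 / K * ‖G y - G x‖ ^ 2 = 1 / (2 * K) * ‖G y - G x‖ ^ 2 + 1 / (2 * K) * ‖G y - G x‖ ^ 2 := by
    field_simp
    ring
  rw [e2] at b2 ⊢
  linarith [b1, b2, e1, e3, e4, hK2]
variable {E : Type*} [NormedAddCommGroup E] [InnerProductSpace ℝ E] [CompleteSpace E]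

lemma gradient_sum {n : ℕ} (f : Fin n → E → ℝ) (hdiff : ∀ i, Differentiable ℝ (f i)) (z : E) :
    gradient (fun y => ∑ i, f i y) z = ∑ i, gradient (f i) z := by
  have h : HasFDerivAt (fun y => ∑ i, f i y)
      (∑ i, InnerProductSpace.toDual ℝ E (gradient (f i) z)) z :=
    HasFDerivAt.fun_sum (fun i _ => (hdiff i z).hasGradientAt)
  have h2 : HasGradientAt (fun y => ∑ i, f i y) (∑ i, gradient (f i) z) z := by
    rw [hasGradientAt_iff_hasFDerivAt, map_sum]
    exact h
  exact h2.gradient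

lemma contraction (F : E → ℝ) (hd : Differentiable ℝ F) (μ L : ℝ) (hμ0 : 0 < μ) (hμL : μ ≤ L)
    (hstrong : ∀ x y : E, F y ≥ F x + ⟪gradient F x, y - x⟫ + μ / 2 * ‖y - x‖ ^ 2)
    (hsmooth : ∀ x y : E, ‖gradient F x - gradient F y‖ ≤ L * ‖x - y‖)
    (η : ℝ) (hη0 : 0 < η) (hη : η ≤ 2 / (μ + L)) (xstar z : E) :
    ‖z - xstar - η • (gradient F z - gradient F xstar)‖ ≤ (1 - η * μ) * ‖z - xstar‖ := by
  set u := z - xstar with hu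
  set d := gradient F z - gradient F xstar with hdd
  have hP : 0 < μ + L := by linarith
  have hη2 : η * (μ + L) ≤ 2 := by
    rw [le_div_iff₀ hP] at hη
    exact hη
  have hθ0 : 0 ≤ 1 - η * μ := by nlinarith
  -- strong monotonicity
  have Smono : μ * ‖u‖ ^ 2 ≤ ⟪d, u⟫ := by
    have h1 := hstrong z xstar
    have h2 := hstrong xstar z
    have e1 : ⟪gradient F z, xstar - z⟫ = -⟪gradient F z, u⟫ := by
      rw [← inner_neg_right]; congr 1; rw [hu]; abel
    have e2 : ‖xstar - z‖ = ‖u‖ := by rw [← norm_neg]; congr 1; rw [hu]; abel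
    have e3 : ⟪d, u⟫ = ⟪gradient F z, u⟫ - ⟪gradient F xstar, u⟫ := inner_sub_left _ _ _
    rw [e1, e2] at h1
    linarith
  have hd_le : ‖d‖ ≤ L * ‖u‖ := hsmooth z xstar
  have hd_ge : μ * ‖u‖ ≤ ‖d‖ := by
    rcases eq_or_lt_of_le (norm_nonneg u) with h0 | h0
    · rw [← h0]
      simpa using norm_nonneg d
    · have hcs : ⟪d, u⟫ ≤ ‖d‖ * ‖u‖ := real_inner_le_norm _ _
      have : μ * ‖u‖ * ‖u‖ ≤ ‖d‖ * ‖u‖ := by nlinarith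
      exact le_of_mul_le_mul_right this h0
  have hd2 : μ ^ 2 * ‖u‖ ^ 2 ≤ ‖d‖ ^ 2 := by
    nlinarith [mul_le_mul hd_ge hd_ge (by positivity : (0:ℝ) ≤ μ * ‖u‖) (norm_nonneg d)]
  -- key coercivity inequality
  have Skey : μ * L * ‖u‖ ^ 2 + ‖d‖ ^ 2 ≤ (μ + L) * ⟪d, u⟫ := by
    rcases eq_or_lt_of_le hμL with heq | hlt
    · subst heq
      nlinarith [Smono, norm_nonneg u, norm_nonneg d]
    · set K := L - μ with hK
      have hKpos : 0 < K := by rw [hK]; linarith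
      set φ : E → ℝ := fun w => F w - μ / 2 * ‖w‖ ^ 2 with hφ
      set G : E → E := fun w => gradient F w - μ • w with hG
      have hexp : ∀ a b : E, ‖b‖ ^ 2 = ‖a‖ ^ 2 + 2 * ⟪a, b - a⟫ + ‖b - a‖ ^ 2 := by
        intro a b
        have := norm_add_sq_real a (b - a)
        simpa using this
      have hGinner : ∀ a b : E, ⟪G a, b - a⟫ = ⟪gradient F a, b - a⟫ - μ * ⟪a, b - a⟫ := by
        intro a b
        rw [hG]
        simp only
        rw [inner_sub_left, real_inner_smul_left]
      have hconv : ∀ a b : E, φ a + ⟪G a, b - a⟫ ≤ φ b := by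
        intro a b
        have h := hstrong a b
        have he := hexp a b
        have hg := hGinner a b
        have he' : μ / 2 * ‖b‖ ^ 2 = μ / 2 * ‖a‖ ^ 2 + μ * ⟪a, b - a⟫ + μ / 2 * ‖b - a‖ ^ 2 := by
          rw [he]; ring
        simp only [hφ]
        linarith
      have hdescφ : ∀ a b : E, φ b ≤ φ a + ⟪G a, b - a⟫ + K / 2 * ‖b - a‖ ^ 2 := by
        intro a b
        have h := descent F hd L (by linarith) hsmooth a b
        have he := hexp a b
        have hg := hGinner a b
        have he' : μ / 2 * ‖b‖ ^ 2 = μ / 2 * ‖a‖ ^ 2 + μ * ⟪a, b - a⟫ + μ / 2 * ‖b - a‖ ^ 2 := by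
          rw [he]; ring
        simp only [hφ, hK]
        linarith
      have hc := cocoercive φ G K hKpos hconv hdescφ z xstar
      have hGd : G z - G xstar = d - μ • u := by
        rw [hG, hdd, hu]
        simp only
        rw [smul_sub]
        abel
      rw [hGd] at hc
      have e1 : ⟪d - μ • u, u⟫ = ⟪d, u⟫ - μ * ‖u‖ ^ 2 := by
        rw [inner_sub_left, real_inner_smul_left, real_inner_self_eq_norm_sq]
      have e2 : ‖d - μ • u‖ ^ 2 = ‖d‖ ^ 2 - 2 * (μ * ⟪d, u⟫) + μ ^ 2 * ‖u‖ ^ 2 := by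
        rw [norm_sub_sq_real, real_inner_smul_right, norm_smul, Real.norm_eq_abs, mul_pow, sq_abs]
      rw [e1, e2] at hc
      have hc' := mul_le_mul_of_nonneg_left hc hKpos.le
      have e3 : K * (1 / K * (‖d‖ ^ 2 - 2 * (μ * ⟪d, u⟫) + μ ^ 2 * ‖u‖ ^ 2)) =
          ‖d‖ ^ 2 - 2 * (μ * ⟪d, u⟫) + μ ^ 2 * ‖u‖ ^ 2 := by
        field_simp
      rw [e3] at hc'
      rw [hK] at hc'
      nlinarith [hc']
  -- expand the step
  have key2 : ‖u - η • d‖ ^ 2 ≤ ((1 - η * μ) * ‖u‖) ^ 2 := by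
    have e1 : ‖u - η • d‖ ^ 2 = ‖u‖ ^ 2 - 2 * (η * ⟪d, u⟫) + η ^ 2 * ‖d‖ ^ 2 := by
      rw [norm_sub_sq_real, real_inner_smul_right, norm_smul, Real.norm_eq_abs, mul_pow, sq_abs,
        real_inner_comm]
    rw [e1]
    have t1 : η * (μ * L * ‖u‖ ^ 2 + ‖d‖ ^ 2) ≤ η * ((μ + L) * ⟪d, u⟫) :=
      mul_le_mul_of_nonneg_left Skey hη0.le
    have ht2f : 0 ≤ 2 * η - η ^ 2 * (μ + L) := by nlinarith
    have t2 : (2 * η - η ^ 2 * (μ + L)) * (μ ^ 2 * ‖u‖ ^ 2) ≤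
        (2 * η - η ^ 2 * (μ + L)) * ‖d‖ ^ 2 := mul_le_mul_of_nonneg_left hd2 ht2f
    have key3 : (μ + L) * (‖u‖ ^ 2 - 2 * (η * ⟪d, u⟫) + η ^ 2 * ‖d‖ ^ 2) ≤
        (μ + L) * (((1 - η * μ) * ‖u‖) ^ 2) := by nlinarith [t1, t2]
    exact le_of_mul_le_mul_left key3 hP
  have := Real.sqrt_le_sqrt key2
  rwa [Real.sqrt_sq (norm_nonneg _), Real.sqrt_sq (by positivity)] at this

end QGDAux

/-- Theorem 1: linear convergence of quantized averaged gradient descent to a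
neighborhood of the optimal solution. -/
theorem quantized_gradient_descent_linear_convergence
    {E : Type*} [NormedAddCommGroup E] [InnerProductSpace ℝ E] [CompleteSpace E]
    (n : ℕ) (hn : 1 ≤ n)
    (f : Fin n → E → ℝ) (μloc Lloc : Fin n → ℝ)
    (hdiff : ∀ i, Differentiable ℝ (f i))
    (hμloc : ∀ i, 0 < μloc i)
    (hstrongloc : ∀ i, ∀ x y : E,
      f i y ≥ f i x + ⟪gradient (f i) x, y - x⟫ + (μloc i / 2) * ‖y - x‖ ^ 2)
    (hsmoothloc : ∀ i, ∀ x y : E,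
      ‖gradient (f i) x - gradient (f i) y‖ ≤ Lloc i * ‖x - y‖)
    (L μ : ℝ) (hL : L = ∑ i, Lloc i) (hμ : μ = ⨅ i, μloc i)
    (hμ0 : 0 < μ) (hμL : μ ≤ L)
    (F : E → ℝ) (hF : F = fun y => ∑ i, f i y)
    (hstrong : ∀ x y : E,
      F y ≥ F x + ⟪gradient F x, y - x⟫ + (μ / 2) * ‖y - x‖ ^ 2)
    (hsmooth : ∀ x y : E, ‖gradient F x - gradient F y‖ ≤ L * ‖x - y‖)
    (xstar : E) (hxstar : gradient F xstar = 0)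
    (Δ : ℝ) (hΔ : 0 ≤ Δ)
    (α : ℝ) (hα0 : 0 < α) (hα : α ≤ 2 * n / (μ + L))
    (xhat : ℕ → E) (x : Fin n → ℕ → E) (e : ℕ → E)
    (hrec : ∀ k, xhat (k + 1) = xhat k - (α / n) • (∑ i, gradient (f i) (x i k)) + e (k + 1))
    (he : ∀ k, ‖e (k + 1)‖ ≤ 2 * Δ)
    (hx : ∀ k, ∀ i, ‖x i k - xhat k‖ ≤ 4 * Δ)
    (ϑ C : ℝ) (hϑ : ϑ = 1 - α * μ / n) (hC : C = (4 * α * L / n + 2) * Δ) :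
    ∀ k : ℕ, ‖xhat k - xstar‖ ≤ ϑ ^ k * ‖xhat 0 - xstar‖ + ((1 - ϑ ^ k) / (1 - ϑ)) * C := by
  have hn0 : (0:ℝ) < n := by exact_mod_cast hn
  have hL0 : 0 < L := lt_of_lt_of_le hμ0 hμL
  have hP : 0 < μ + L := by linarith
  set η : ℝ := α / n with hηdef
  have hη0 : 0 < η := by positivity
  have hηle : η ≤ 2 / (μ + L) := by
    rw [le_div_iff₀ hP] at hα ⊢
    rw [hηdef, div_mul_eq_mul_div, div_le_iff₀ hn0]
    linarith
  have hη2 : η * (μ + L) ≤ 2 := by rwa [← le_div_iff₀ hP]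
  have hθeq : ϑ = 1 - η * μ := by rw [hϑ, hηdef]; ring
  have hθ0 : 0 ≤ ϑ := by
    rw [hθeq]
    nlinarith [mul_le_mul_of_nonneg_left (show 2 * μ ≤ μ + L by linarith) hη0.le]
  have hθlt : ϑ < 1 := by rw [hθeq]; nlinarith
  have h1θ : 0 < 1 - ϑ := by linarith
  have hC0 : 0 ≤ C := by
    rw [hC]
    apply mul_nonneg _ hΔ
    have h4 : (0:ℝ) ≤ 4 * α * L / n := by positivity
    linarith
  have hSnn : ∀ k : ℕ, 0 ≤ (1 - ϑ ^ k) / (1 - ϑ) := by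
    intro k
    apply div_nonneg _ h1θ.le
    have := pow_le_one₀ hθ0 hθlt.le (n := k)
    linarith
  rcases subsingleton_or_nontrivial E with hsub | hnt
  · intro k
    have e1 : xhat k - xstar = 0 := Subsingleton.elim _ _
    have e2 : xhat 0 - xstar = 0 := Subsingleton.elim _ _
    rw [e1, e2, norm_zero, mul_zero, zero_add]
    exact mul_nonneg (hSnn k) hC0
  · -- each local Lipschitz constant is nonnegative
    obtain ⟨v, hv⟩ := exists_ne (0 : E)
    have hv0 : 0 < ‖v‖ ^ 2 := by
      have := norm_pos_iff.mpr hv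
      positivity
    have hLloc : ∀ i, 0 ≤ Lloc i := by
      intro i
      have h1 := hstrongloc i 0 v
      have h2 := hstrongloc i v 0
      have hn1 : ‖(0:E) - v‖ = ‖v‖ := by rw [zero_sub, norm_neg]
      have hn2 : (v : E) - 0 = v := by abel
      have hmono : μloc i * ‖v‖ ^ 2 ≤ ⟪gradient (f i) v - gradient (f i) 0, v⟫ := by
        rw [inner_sub_left]
        have e1 : ⟪gradient (f i) v, 0 - v⟫ = -⟪gradient (f i) v, v⟫ := by
          rw [zero_sub, inner_neg_right]
        rw [hn2] at h1
        rw [e1, hn1] at h2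
        linarith
      have hcs : ⟪gradient (f i) v - gradient (f i) 0, v⟫ ≤
          ‖gradient (f i) v - gradient (f i) 0‖ * ‖v‖ := real_inner_le_norm _ _
      have hlip := hsmoothloc i v 0
      rw [hn2] at hlip
      nlinarith [hμloc i, norm_nonneg v]
    have hF' : Differentiable ℝ F := by
      rw [hF]
      exact Differentiable.fun_sum (fun i _ => hdiff i)
    have hgradF : ∀ z : E, gradient F z = ∑ i, gradient (f i) z := by
      intro z
      rw [hF]
      exact gradient_sum f hdiff z
    -- one step bound
    have step : ∀ k, ‖xhat (k+1) - xstar‖ ≤ ϑ * ‖xhat k - xstar‖ + C := by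
      intro k
      have hdecomp : xhat (k+1) - xstar =
          (xhat k - xstar - η • (gradient F (xhat k) - gradient F xstar))
          + (η • (gradient F (xhat k) - ∑ i, gradient (f i) (x i k)) + e (k+1)) := by
        rw [hrec k, hxstar, smul_sub, smul_sub, smul_zero, sub_zero]
        abel
      have hb1 : ‖xhat k - xstar - η • (gradient F (xhat k) - gradient F xstar)‖ ≤
          ϑ * ‖xhat k - xstar‖ := by
        rw [hθeq]
        exact contraction F hF' μ L hμ0 hμL hstrong hsmooth η hη0 hηle xstar (xhat k)
      have hb2 : ‖gradient F (xhat k) - ∑ i, gradient (f i) (x i k)‖ ≤ L * (4 * Δ) := by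
        have e1 : gradient F (xhat k) - ∑ i, gradient (f i) (x i k)
            = ∑ i, (gradient (f i) (xhat k) - gradient (f i) (x i k)) := by
          rw [hgradF, Finset.sum_sub_distrib]
        rw [e1]
        calc ‖∑ i, (gradient (f i) (xhat k) - gradient (f i) (x i k))‖
            ≤ ∑ i, ‖gradient (f i) (xhat k) - gradient (f i) (x i k)‖ :=
              norm_sum_le _ _
          _ ≤ ∑ i, Lloc i * (4 * Δ) := by
              apply Finset.sum_le_sum
              intro i _
              calc ‖gradient (f i) (xhat k) - gradient (f i) (x i k)‖
                  ≤ Lloc i * ‖xhat k - x i k‖ := hsmoothloc i (xhat k) (x i k)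
                _ ≤ Lloc i * (4 * Δ) := by
                    apply mul_le_mul_of_nonneg_left _ (hLloc i)
                    rw [← norm_neg]
                    simpa using hx k i
          _ = L * (4 * Δ) := by rw [← Finset.sum_mul, ← hL]
      calc ‖xhat (k+1) - xstar‖
          ≤ ‖xhat k - xstar - η • (gradient F (xhat k) - gradient F xstar)‖
            + ‖η • (gradient F (xhat k) - ∑ i, gradient (f i) (x i k)) + e (k+1)‖ := by
            rw [hdecomp]; exact norm_add_le _ _
        _ ≤ ϑ * ‖xhat k - xstar‖
            + (‖η • (gradient F (xhat k) - ∑ i, gradient (f i) (x i k))‖ + ‖e (k+1)‖) := by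
            have := norm_add_le (η • (gradient F (xhat k) - ∑ i, gradient (f i) (x i k)))
              (e (k+1))
            linarith [hb1]
        _ ≤ ϑ * ‖xhat k - xstar‖ + (η * (L * (4 * Δ)) + 2 * Δ) := by
            have h2 : ‖η • (gradient F (xhat k) - ∑ i, gradient (f i) (x i k))‖
                = η * ‖gradient F (xhat k) - ∑ i, gradient (f i) (x i k)‖ := by
              rw [norm_smul, Real.norm_eq_abs, abs_of_pos hη0]
            rw [h2]
            have := mul_le_mul_of_nonneg_left hb2 hη0.le
            linarith [he k]
        _ = ϑ * ‖xhat k - xstar‖ + C := by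
            rw [hC, hηdef]
            ring
    intro k
    induction k with
    | zero => simp
    | succ k ih =>
      have hstep := step k
      have h2 : ϑ * ‖xhat k - xstar‖ ≤
          ϑ * (ϑ ^ k * ‖xhat 0 - xstar‖ + (1 - ϑ ^ k) / (1 - ϑ) * C) :=
        mul_le_mul_of_nonneg_left ih hθ0
      have hgeo : ϑ * (ϑ ^ k * ‖xhat 0 - xstar‖ + (1 - ϑ ^ k) / (1 - ϑ) * C) + C =
          ϑ ^ (k+1) * ‖xhat 0 - xstar‖ + (1 - ϑ ^ (k+1)) / (1 - ϑ) * C := by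
        field_simp
        ring
      linarith
end
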